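/- Let Θ_{i_1}, ..., Θ_{i_m} be one-variable inner functions in distinct variables i_1 < ... < i_m, with extensions Θ̃_{i_j}(z) = Θ_{i_j}(z_{i_j}) to 𝔻ⁿ. Then the submodule S = Θ̃_{i_1} H²(𝔻ⁿ) + ... + Θ̃_{i_m} H²(𝔻ⁿ) is closed, and the orthogonal projection onto S is I - ∏_{j=1}^m (I - M_{Θ̃_{i_j}} M_{Θ̃_{i_j}}^*). -/

import Mathlib

open ContinuousLinearMap

open scoped InnerProductSpace

namespace Stmt17

noncomputable section

variable {n : ℕ}

local notation "H" => lp (fun _ : Fin n → ℕ => ℂ) 2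

def e (q : Fin n → ℕ) : H := lp.single 2 q (1 : ℂ)

lemma e_apply (q r : Fin n → ℕ) : (e q : H) r = if r = q then (1:ℂ) else 0 := by
  rw [e, lp.single_apply]
  split_ifs with h
  · subst h; exact Pi.single_eq_same _ _
  · exact Pi.single_eq_of_ne h _

lemma inner_e_left (r : Fin n → ℕ) (x : H) : ⟪e (n := n) r, x⟫_ℂ = x r := by
  rw [e, lp.inner_single_left]
  simp [RCLike.inner_apply]

lemma adj_coord (A : H →L[ℂ] H) (x : H) (r : Fin n → ℕ) :
    (ContinuousLinearMap.adjoint A x) r = ⟪A (e r), x⟫_ℂ := by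
  rw [← inner_e_left, ContinuousLinearMap.adjoint_inner_right]

lemma Sadj_coord (Si : H →L[ℂ] H) (i : Fin n)
    (hSi : ∀ k : Fin n → ℕ, Si (e k) = e (k + Pi.single i 1))
    (x : H) (r : Fin n → ℕ) :
    (ContinuousLinearMap.adjoint Si x) r = x (r + Pi.single i 1) := by
  rw [adj_coord, hSi, inner_e_left]

lemma Sadj_e_pos (Si : H →L[ℂ] H) (i : Fin n)
    (hSi : ∀ k : Fin n → ℕ, Si (e k) = e (k + Pi.single i 1))
    (q : Fin n → ℕ) (hq : 1 ≤ q i) :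
    ContinuousLinearMap.adjoint Si (e q) = e (q - Pi.single i 1) := by
  apply lp.ext; funext r
  rw [Sadj_coord Si i hSi, e_apply, e_apply]
  congr 1
  simp only [eq_iff_iff]
  constructor
  · intro h
    funext i'
    have := congrFun h i'
    by_cases hi : i' = i <;> subst_eqs <;>
      simp_all [Pi.sub_apply, Pi.add_apply, Pi.single_apply] <;> omega
  · intro h
    subst h
    funext i'
    have hq' := hq
    by_cases hi : i' = i <;> subst_eqs <;>
      simp_all [Pi.sub_apply, Pi.add_apply, Pi.single_apply] <;> omega

lemma Sadj_e_zero (Si : H →L[ℂ] H) (i : Fin n)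
    (hSi : ∀ k : Fin n → ℕ, Si (e k) = e (k + Pi.single i 1))
    (q : Fin n → ℕ) (hq : q i = 0) :
    ContinuousLinearMap.adjoint Si (e q) = 0 := by
  apply lp.ext; funext r
  rw [Sadj_coord Si i hSi, e_apply]
  have : ¬ (r + Pi.single i 1 = q) := by
    intro h
    have := congrFun h i
    simp [Pi.single_apply] at this
    omega
  simp only [this, if_false]
  rfl

lemma S_coord (Si : H →L[ℂ] H) (i : Fin n)
    (hSi : ∀ k : Fin n → ℕ, Si (e k) = e (k + Pi.single i 1))
    (y : H) (p : Fin n → ℕ) :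
    (Si y) p = if 1 ≤ p i then y (p - Pi.single i 1) else 0 := by
  rw [← inner_e_left, ← ContinuousLinearMap.adjoint_inner_left]
  by_cases hp : 1 ≤ p i
  · rw [Sadj_e_pos Si i hSi p hp, inner_e_left, if_pos hp]
  · rw [Sadj_e_zero Si i hSi p (by omega), if_neg hp, inner_zero_left]

def ent (A : H →L[ℂ] H) (p q : Fin n → ℕ) : ℂ := (A (e q)) p

lemma entR1 (S : Fin n → (H →L[ℂ] H))
    (hS : ∀ (i : Fin n) (k : Fin n → ℕ), S i (e k) = e (k + Pi.single i 1))
    (A : H →L[ℂ] H) (hA1 : ∀ i, A ∘L S i = S i ∘L A)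
    (i : Fin n) (p q : Fin n → ℕ) :
    ent A p (q + Pi.single i 1)
      = if 1 ≤ p i then ent A (p - Pi.single i 1) q else 0 := by
  have h := congrFun (congrArg (fun (B : H →L[ℂ] H) => (⇑B : H → H)) (hA1 i)) (e q)
  simp only [ContinuousLinearMap.coe_comp', Function.comp_apply] at h
  have h' : A (e (q + Pi.single i 1)) = S i (A (e q)) := by rw [← hS i q]; exact h
  calc ent A p (q + Pi.single i 1) = (S i (A (e q))) p := by rw [ent, h']
    _ = _ := by rw [S_coord (S i) i (hS i)]; rfl

lemma entR2 (S : Fin n → (H →L[ℂ] H))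
    (hS : ∀ (i : Fin n) (k : Fin n → ℕ), S i (e k) = e (k + Pi.single i 1))
    (A : H →L[ℂ] H) (i0 : Fin n)
    (hA2 : ∀ i, i ≠ i0 → A ∘L ContinuousLinearMap.adjoint (S i)
        = ContinuousLinearMap.adjoint (S i) ∘L A)
    (i : Fin n) (hi : i ≠ i0) (p q : Fin n → ℕ) :
    ent A (p + Pi.single i 1) q
      = if 1 ≤ q i then ent A p (q - Pi.single i 1) else 0 := by
  have h := congrFun (congrArg (fun (B : H →L[ℂ] H) => (⇑B : H → H)) (hA2 i hi)) (e q)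
  simp only [ContinuousLinearMap.coe_comp', Function.comp_apply] at h
  have h2 := Sadj_coord (S i) i (hS i) (A (e q)) p
  by_cases hq : 1 ≤ q i
  · rw [if_pos hq]
    rw [Sadj_e_pos (S i) i (hS i) q hq] at h
    calc ent A (p + Pi.single i 1) q = (A (e q)) (p + Pi.single i 1) := rfl
      _ = (ContinuousLinearMap.adjoint (S i) (A (e q))) p := h2.symm
      _ = (A (e (q - Pi.single i 1))) p := by rw [← h]
      _ = _ := rfl
  · rw [if_neg hq]
    rw [Sadj_e_zero (S i) i (hS i) q (by omega), map_zero] at h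
    calc ent A (p + Pi.single i 1) q = (A (e q)) (p + Pi.single i 1) := rfl
      _ = (ContinuousLinearMap.adjoint (S i) (A (e q))) p := h2.symm
      _ = ((0 : H) : (Fin n → ℕ) → ℂ) p := by rw [← h]
      _ = 0 := rfl

lemma ent_step (S : Fin n → (H →L[ℂ] H))
    (hS : ∀ (i : Fin n) (k : Fin n → ℕ), S i (e k) = e (k + Pi.single i 1))
    (A : H →L[ℂ] H) (hA1 : ∀ i, A ∘L S i = S i ∘L A)
    (i : Fin n) (p q : Fin n → ℕ) :
    ent A (p + Pi.single i 1) (q + Pi.single i 1) = ent A p q := by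
  rw [entR1 S hS A hA1 i]
  have h1 : 1 ≤ (p + Pi.single i 1 : Fin n → ℕ) i := by simp
  rw [if_pos h1]
  congr 1
  funext i'
  by_cases hi : i' = i
  · subst hi; simp
  · simp [Pi.single_eq_of_ne hi]

lemma ent_trans_aux (S : Fin n → (H →L[ℂ] H))
    (hS : ∀ (i : Fin n) (k : Fin n → ℕ), S i (e k) = e (k + Pi.single i 1))
    (A : H →L[ℂ] H) (hA1 : ∀ i, A ∘L S i = S i ∘L A)
    (N : ℕ) : ∀ d p q : Fin n → ℕ, Finset.univ.sum d = N →
    ent A (p + d) (q + d) = ent A p q := by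
  induction N with
  | zero =>
    intro d p q hN
    have hd : d = 0 := by
      funext i
      exact Finset.sum_eq_zero_iff.mp hN i (Finset.mem_univ i)
    simp [hd]
  | succ N ih =>
    intro d p q hN
    have hex : ∃ i, d i ≠ 0 := by
      by_contra hc
      push_neg at hc
      simp [Finset.sum_congr rfl fun i _ => hc i] at hN
    obtain ⟨i, hi⟩ := hex
    have hdd : d = (d - Pi.single i 1) + Pi.single i 1 := by
      funext i'
      by_cases h : i' = i
      · subst h; simp only [Pi.add_apply, Pi.sub_apply, Pi.single_eq_same]; omega
      · simp only [Pi.add_apply, Pi.sub_apply, Pi.single_eq_of_ne h]; omega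
    have hsum : Finset.univ.sum (d - Pi.single i 1) = N := by
      have h2 : Finset.univ.sum d
          = Finset.univ.sum (d - Pi.single i 1) + Finset.univ.sum (Pi.single i (1:ℕ)) := by
        conv_lhs => rw [hdd]
        exact Finset.sum_add_distrib
      have h3 : Finset.univ.sum (Pi.single i (1:ℕ)) = 1 := by
        simp [Finset.sum_pi_single]
      omega
    have h1 : p + d = (p + (d - Pi.single i 1)) + Pi.single i 1 := by
      conv_lhs => rw [hdd]
      funext i'; simp [add_assoc]
    have h2 : q + d = (q + (d - Pi.single i 1)) + Pi.single i 1 := by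
      conv_lhs => rw [hdd]
      funext i'; simp [add_assoc]
    rw [h1, h2, ent_step S hS A hA1 i, ih (d - Pi.single i 1) p q hsum]

lemma ent_trans (S : Fin n → (H →L[ℂ] H))
    (hS : ∀ (i : Fin n) (k : Fin n → ℕ), S i (e k) = e (k + Pi.single i 1))
    (A : H →L[ℂ] H) (hA1 : ∀ i, A ∘L S i = S i ∘L A)
    (d p q : Fin n → ℕ) :
    ent A (p + d) (q + d) = ent A p q :=
  ent_trans_aux S hS A hA1 (Finset.univ.sum d) d p q rfl

lemma ent_shift (S : Fin n → (H →L[ℂ] H))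
    (hS : ∀ (i : Fin n) (k : Fin n → ℕ), S i (e k) = e (k + Pi.single i 1))
    (A : H →L[ℂ] H) (hA1 : ∀ i, A ∘L S i = S i ∘L A) (i0 : Fin n)
    (p q : Fin n → ℕ) (h1 : ∀ i, i ≠ i0 → p i = q i) (h2 : q i0 ≤ p i0) :
    ent A p q = ent A (Pi.single i0 (p i0 - q i0)) 0 := by
  have key := ent_trans S hS A hA1 q (Pi.single i0 (p i0 - q i0)) 0
  have hp : Pi.single i0 (p i0 - q i0) + q = p := by
    funext i
    by_cases h : i = i0
    · subst h; simp only [Pi.add_apply, Pi.single_eq_same]; omega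
    · simp only [Pi.add_apply, Pi.single_eq_of_ne h, zero_add]; exact (h1 i h).symm
  have hz : (0 : Fin n → ℕ) + q = q := by simp
  rw [hp, hz] at key
  exact key

lemma ent_supp (S : Fin n → (H →L[ℂ] H))
    (hS : ∀ (i : Fin n) (k : Fin n → ℕ), S i (e k) = e (k + Pi.single i 1))
    (A : H →L[ℂ] H) (i0 : Fin n)
    (hA1 : ∀ i, A ∘L S i = S i ∘L A)
    (hA2 : ∀ i, i ≠ i0 → A ∘L ContinuousLinearMap.adjoint (S i)
        = ContinuousLinearMap.adjoint (S i) ∘L A)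
    (p q : Fin n → ℕ)
    (h : (∃ i, i ≠ i0 ∧ p i ≠ q i) ∨ p i0 < q i0) : ent A p q = 0 := by
  have key := ent_trans S hS A hA1 (fun i => min (p i) (q i))
      (p - fun i => min (p i) (q i)) (q - fun i => min (p i) (q i))
  have hp : ((p - fun i => min (p i) (q i)) + fun i => min (p i) (q i)) = p := by
    funext i; simp only [Pi.add_apply, Pi.sub_apply]; omega
  have hq : ((q - fun i => min (p i) (q i)) + fun i => min (p i) (q i)) = q := by
    funext i; simp only [Pi.add_apply, Pi.sub_apply]; omega
  rw [hp, hq] at key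
  rw [key]
  rcases h with ⟨i, hi, hne⟩ | hlt
  · rcases Nat.lt_or_ge (p i) (q i) with hlt | hge
    · have hqq : (q - fun i => min (p i) (q i))
          = ((q - fun i => min (p i) (q i)) - Pi.single i 1) + Pi.single i 1 := by
        funext i'
        by_cases h : i' = i
        · subst h; simp only [Pi.add_apply, Pi.sub_apply, Pi.single_eq_same]; omega
        · simp only [Pi.add_apply, Pi.sub_apply, Pi.single_eq_of_ne h]; omega
      rw [hqq, entR1 S hS A hA1 i]
      have : ¬ (1 ≤ (p - fun i => min (p i) (q i)) i) := by
        simp only [Pi.sub_apply]; omega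
      rw [if_neg this]
    · have hpp : (p - fun i => min (p i) (q i))
          = ((p - fun i => min (p i) (q i)) - Pi.single i 1) + Pi.single i 1 := by
        funext i'
        by_cases h : i' = i
        · subst h; simp only [Pi.add_apply, Pi.sub_apply, Pi.single_eq_same]; omega
        · simp only [Pi.add_apply, Pi.sub_apply, Pi.single_eq_of_ne h]; omega
      rw [hpp, entR2 S hS A i0 hA2 i hi]
      have : ¬ (1 ≤ (q - fun i => min (p i) (q i)) i) := by
        simp only [Pi.sub_apply]; omega
      rw [if_neg this]
  · have hqq : (q - fun i => min (p i) (q i))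
        = ((q - fun i => min (p i) (q i)) - Pi.single i0 1) + Pi.single i0 1 := by
      funext i'
      by_cases h : i' = i0
      · subst h; simp only [Pi.add_apply, Pi.sub_apply, Pi.single_eq_same]; omega
      · simp only [Pi.add_apply, Pi.sub_apply, Pi.single_eq_of_ne h]; omega
    rw [hqq, entR1 S hS A hA1 i0]
    have : ¬ (1 ≤ (p - fun i => min (p i) (q i)) i0) := by
      simp only [Pi.sub_apply]; omega
    rw [if_neg this]

lemma ent_ne (S : Fin n → (H →L[ℂ] H))
    (hS : ∀ (i : Fin n) (k : Fin n → ℕ), S i (e k) = e (k + Pi.single i 1))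
    (A : H →L[ℂ] H) (i0 : Fin n)
    (hA1 : ∀ i, A ∘L S i = S i ∘L A)
    (hA2 : ∀ i, i ≠ i0 → A ∘L ContinuousLinearMap.adjoint (S i)
        = ContinuousLinearMap.adjoint (S i) ∘L A)
    (p q : Fin n → ℕ) (h : ent A p q ≠ 0) :
    (∀ i, i ≠ i0 → p i = q i) ∧ q i0 ≤ p i0 := by
  by_contra hc
  apply h
  apply ent_supp S hS A i0 hA1 hA2
  push_neg at hc
  by_cases h1 : ∀ i, i ≠ i0 → p i = q i
  · exact Or.inr (by have := hc h1; omega)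
  · push_neg at h1
    exact Or.inl h1


def cc (A : H →L[ℂ] H) (i0 : Fin n) (t : ℕ) : ℂ := ent A (Pi.single i0 t) 0

lemma adj_e_coord (A : H →L[ℂ] H) (p q : Fin n → ℕ) :
    (ContinuousLinearMap.adjoint A (e p)) q = (starRingEnd ℂ) (ent A p q) := by
  rw [adj_coord, ← inner_conj_symm, inner_e_left]
  rfl

lemma adjB_e (S : Fin n → (H →L[ℂ] H))
    (hS : ∀ (i : Fin n) (k : Fin n → ℕ), S i (e k) = e (k + Pi.single i 1))
    (B : H →L[ℂ] H) (iB : Fin n)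
    (hB1 : ∀ i, B ∘L S i = S i ∘L B)
    (hB2 : ∀ i, i ≠ iB → B ∘L ContinuousLinearMap.adjoint (S i)
        = ContinuousLinearMap.adjoint (S i) ∘L B)
    (p : Fin n → ℕ) :
    ContinuousLinearMap.adjoint B (e p)
      = ∑ t ∈ Finset.range (p iB + 1),
          (starRingEnd ℂ) (cc B iB t) • e (p - Pi.single iB t) := by
  apply lp.ext; funext q
  rw [adj_e_coord]
  rw [lp.coeFn_sum, Finset.sum_apply]
  have hterm : ∀ t, ((starRingEnd ℂ) (cc B iB t) • e (p - Pi.single iB t) : H) q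
      = (starRingEnd ℂ) (cc B iB t) * (if q = p - Pi.single iB t then 1 else 0) := by
    intro t
    rw [lp.coeFn_smul, Pi.smul_apply, e_apply]
    simp [smul_eq_mul]
  by_cases hC : (∀ i, i ≠ iB → p i = q i) ∧ q iB ≤ p iB
  · obtain ⟨hC1, hC2⟩ := hC
    rw [ent_shift S hS B hB1 iB p q hC1 hC2]
    rw [Finset.sum_eq_single (p iB - q iB)]
    · rw [hterm]
      have : q = p - Pi.single iB (p iB - q iB) := by
        funext i
        by_cases h : i = iB
        · subst h; simp only [Pi.sub_apply, Pi.single_eq_same]; omega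
        · simp only [Pi.sub_apply, Pi.single_eq_of_ne h]
          have := hC1 i h; omega
      rw [if_pos this, mul_one]
      rfl
    · intro t ht hne
      rw [hterm]
      have : ¬ (q = p - Pi.single iB t) := by
        intro h
        have := congrFun h iB
        simp only [Pi.sub_apply, Pi.single_eq_same] at this
        simp only [Finset.mem_range] at ht
        omega
      rw [if_neg this, mul_zero]
    · intro h
      exfalso
      apply h
      simp only [Finset.mem_range]
      omega
  · have hz : ent B p q = 0 := by
      apply ent_supp S hS B iB hB1 hB2
      by_cases h1 : ∀ i, i ≠ iB → p i = q i
      · refine Or.inr ?_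
        have : ¬ q iB ≤ p iB := fun hle => hC ⟨h1, hle⟩
        omega
      · push_neg at h1
        exact Or.inl h1
    rw [hz, map_zero]
    symm
    apply Finset.sum_eq_zero
    intro t ht
    rw [hterm]
    have : ¬ (q = p - Pi.single iB t) := by
      intro h
      apply hC
      constructor
      · intro i hi
        have := congrFun h i
        simp only [Pi.sub_apply, Pi.single_eq_of_ne hi] at this
        omega
      · have := congrFun h iB
        simp only [Pi.sub_apply, Pi.single_eq_same] at this
        omega
    rw [if_neg this, mul_zero]

lemma mixed_basis (S : Fin n → (H →L[ℂ] H))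
    (hS : ∀ (i : Fin n) (k : Fin n → ℕ), S i (e k) = e (k + Pi.single i 1))
    (A : H →L[ℂ] H) (iA : Fin n)
    (hA1 : ∀ i, A ∘L S i = S i ∘L A)
    (hA2 : ∀ i, i ≠ iA → A ∘L ContinuousLinearMap.adjoint (S i)
        = ContinuousLinearMap.adjoint (S i) ∘L A)
    (B : H →L[ℂ] H) (iB : Fin n)
    (hB1 : ∀ i, B ∘L S i = S i ∘L B)
    (hB2 : ∀ i, i ≠ iB → B ∘L ContinuousLinearMap.adjoint (S i)
        = ContinuousLinearMap.adjoint (S i) ∘L B)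
    (hAB : iA ≠ iB) (p : Fin n → ℕ) :
    A (ContinuousLinearMap.adjoint B (e p))
      = ContinuousLinearMap.adjoint B (A (e p)) := by
  apply lp.ext; funext r
  -- LHS
  rw [adjB_e S hS B iB hB1 hB2 p, map_sum]
  rw [lp.coeFn_sum, Finset.sum_apply]
  have hterm : ∀ t, (A ((starRingEnd ℂ) (cc B iB t) • e (p - Pi.single iB t)) : H) r
      = (starRingEnd ℂ) (cc B iB t) * ent A r (p - Pi.single iB t) := by
    intro t
    rw [map_smul, lp.coeFn_smul, Pi.smul_apply, smul_eq_mul]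
    rfl
  -- RHS
  have hRHS : (ContinuousLinearMap.adjoint B (A (e p))) r
      = ∑' s : Fin n → ℕ, (starRingEnd ℂ) (ent B s r) * ent A s p := by
    rw [adj_coord, lp.inner_eq_tsum]
    refine tsum_congr fun s => ?_
    simp only [ent, RCLike.inner_apply]
    ring
  rw [hRHS]
  set t0 := p iB - r iB with ht0
  set s0 := Function.update p iA (r iA) with hs0
  -- tsum reduces to s0
  have hts : (∑' s : Fin n → ℕ, (starRingEnd ℂ) (ent B s r) * ent A s p)
      = (starRingEnd ℂ) (ent B s0 r) * ent A s0 p := by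
    apply tsum_eq_single
    intro s hs
    by_contra hne
    rcases mul_ne_zero_iff.mp hne with ⟨hb, ha⟩
    have hb' : ent B s r ≠ 0 := fun h => hb (by rw [h, map_zero])
    have hBc := ent_ne S hS B iB hB1 hB2 s r hb'
    have hAc := ent_ne S hS A iA hA1 hA2 s p ha
    apply hs
    funext i
    by_cases h : i = iA
    · rw [h, hs0, Function.update_self]
      exact hBc.1 iA hAB
    · rw [hs0, Function.update_of_ne h]
      exact hAc.1 i h
  rw [hts]
  -- finite sum reduces to t0
  have hfs : (∑ t ∈ Finset.range (p iB + 1),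
        (A ((starRingEnd ℂ) (cc B iB t) • e (p - Pi.single iB t)) : H) r)
      = (starRingEnd ℂ) (cc B iB t0) * ent A r (p - Pi.single iB t0) := by
    rw [Finset.sum_eq_single t0]
    · exact hterm t0
    · intro t ht hne
      rw [hterm]
      by_contra hz
      rcases mul_ne_zero_iff.mp hz with ⟨-, ha⟩
      have hAc := ent_ne S hS A iA hA1 hA2 r (p - Pi.single iB t) ha
      have h1 := hAc.1 iB (Ne.symm hAB)
      simp only [Pi.sub_apply, Pi.single_eq_same] at h1
      simp only [Finset.mem_range] at ht
      omega
    · intro h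
      exfalso
      apply h
      simp only [Finset.mem_range]
      omega
  rw [hfs]
  -- now compare the two single terms
  by_cases h1 : ∀ i, i ≠ iA → i ≠ iB → r i = p i
  · by_cases h2 : r iB ≤ p iB
    · by_cases h3 : p iA ≤ r iA
      · -- main case
        have hB' : ent B s0 r = cc B iB t0 := by
          have e1 : ∀ i, i ≠ iB → s0 i = r i := by
            intro i hi
            by_cases h : i = iA
            · subst h; rw [hs0, Function.update_self]
            · rw [hs0, Function.update_of_ne h]; exact (h1 i h hi).symm
          have e2 : r iB ≤ s0 iB := by
            rw [hs0, Function.update_of_ne (Ne.symm hAB)]; exact h2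
          have := ent_shift S hS B hB1 iB s0 r e1 e2
          rw [this]
          have : s0 iB - r iB = t0 := by
            rw [hs0, Function.update_of_ne (Ne.symm hAB)]
          rw [this]
          rfl
        have hA' : ent A s0 p = cc A iA (r iA - p iA) := by
          have e1 : ∀ i, i ≠ iA → s0 i = p i := by
            intro i hi; rw [hs0, Function.update_of_ne hi]
          have e2 : p iA ≤ s0 iA := by rw [hs0, Function.update_self]; exact h3
          have := ent_shift S hS A hA1 iA s0 p e1 e2
          rw [this]
          have : s0 iA - p iA = r iA - p iA := by rw [hs0, Function.update_self]
          rw [this]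
          rfl
        have hA'' : ent A r (p - Pi.single iB t0) = cc A iA (r iA - p iA) := by
          have e1 : ∀ i, i ≠ iA → r i = (p - Pi.single iB t0 : Fin n → ℕ) i := by
            intro i hi
            by_cases h : i = iB
            · subst h; simp only [Pi.sub_apply, Pi.single_eq_same]; omega
            · simp only [Pi.sub_apply, Pi.single_eq_of_ne h]
              have := h1 i hi h; omega
          have e2 : (p - Pi.single iB t0 : Fin n → ℕ) iA ≤ r iA := by
            simp only [Pi.sub_apply, Pi.single_eq_of_ne hAB]
            omega
          have := ent_shift S hS A hA1 iA r (p - Pi.single iB t0) e1 e2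
          rw [this]
          have : r iA - (p - Pi.single iB t0 : Fin n → ℕ) iA = r iA - p iA := by
            simp only [Pi.sub_apply, Pi.single_eq_of_ne hAB]
            omega
          rw [this]
          rfl
        rw [hB', hA', hA'']
      · -- r iA < p iA : both sides zero via A-factor
        push_neg at h3
        have z1 : ent A r (p - Pi.single iB t0) = 0 := by
          apply ent_supp S hS A iA hA1 hA2
          refine Or.inr ?_
          simp only [Pi.sub_apply, Pi.single_eq_of_ne hAB]
          omega
        have z2 : ent A s0 p = 0 := by
          apply ent_supp S hS A iA hA1 hA2
          refine Or.inr ?_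
          rw [hs0, Function.update_self]
          omega
        rw [z1, z2, mul_zero, mul_zero]
    · -- p iB < r iB : both sides zero
      push_neg at h2
      have hto : t0 = 0 := by omega
      have z1 : ent A r (p - Pi.single iB t0) = 0 := by
        apply ent_supp S hS A iA hA1 hA2
        refine Or.inl ⟨iB, Ne.symm hAB, ?_⟩
        simp only [Pi.sub_apply, Pi.single_eq_same]
        omega
      have z2 : ent B s0 r = 0 := by
        apply ent_supp S hS B iB hB1 hB2
        refine Or.inr ?_
        rw [hs0, Function.update_of_ne (Ne.symm hAB)]
        omega
      rw [z1, z2, mul_zero, map_zero, zero_mul]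
  · -- some off coordinate differs
    push_neg at h1
    obtain ⟨i, hiA, hiB, hne⟩ := h1
    have z1 : ent A r (p - Pi.single iB t0) = 0 := by
      apply ent_supp S hS A iA hA1 hA2
      refine Or.inl ⟨i, hiA, ?_⟩
      simp only [Pi.sub_apply, Pi.single_eq_of_ne hiB]
      omega
    have z2 : ent B s0 r = 0 := by
      apply ent_supp S hS B iB hB1 hB2
      refine Or.inl ⟨i, hiB, ?_⟩
      rw [hs0, Function.update_of_ne hiA]
      exact fun h => hne h.symm
    rw [z1, z2, mul_zero, map_zero, zero_mul]

lemma coord_adj (C : H →L[ℂ] H) (x : H) (r : Fin n → ℕ) :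
    (C x) r = ⟪ContinuousLinearMap.adjoint C (e r), x⟫_ℂ := by
  rw [← inner_e_left r (C x), ← ContinuousLinearMap.adjoint_inner_left]

lemma mixed_comm (S : Fin n → (H →L[ℂ] H))
    (hS : ∀ (i : Fin n) (k : Fin n → ℕ), S i (e k) = e (k + Pi.single i 1))
    (A : H →L[ℂ] H) (iA : Fin n)
    (hA1 : ∀ i, A ∘L S i = S i ∘L A)
    (hA2 : ∀ i, i ≠ iA → A ∘L ContinuousLinearMap.adjoint (S i)
        = ContinuousLinearMap.adjoint (S i) ∘L A)
    (B : H →L[ℂ] H) (iB : Fin n)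
    (hB1 : ∀ i, B ∘L S i = S i ∘L B)
    (hB2 : ∀ i, i ≠ iB → B ∘L ContinuousLinearMap.adjoint (S i)
        = ContinuousLinearMap.adjoint (S i) ∘L B)
    (hAB : iA ≠ iB) :
    A ∘L ContinuousLinearMap.adjoint B
      = ContinuousLinearMap.adjoint B ∘L A := by
  refine ContinuousLinearMap.ext fun x => ?_
  apply lp.ext; funext r
  have hL : ((A ∘L ContinuousLinearMap.adjoint B) x) r
      = ⟪B (ContinuousLinearMap.adjoint A (e r)), x⟫_ℂ := by
    rw [coord_adj (A ∘L ContinuousLinearMap.adjoint B) x r,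
      ContinuousLinearMap.adjoint_comp, ContinuousLinearMap.adjoint_adjoint]
    rfl
  have hR : ((ContinuousLinearMap.adjoint B ∘L A) x) r
      = ⟪ContinuousLinearMap.adjoint A (B (e r)), x⟫_ℂ := by
    rw [coord_adj (ContinuousLinearMap.adjoint B ∘L A) x r,
      ContinuousLinearMap.adjoint_comp, ContinuousLinearMap.adjoint_adjoint]
    rfl
  rw [hL, hR, mixed_basis S hS B iB hB1 hB2 A iA hA1 hA2 (Ne.symm hAB) r]

end
end Stmt17

set_option maxHeartbeats 1000000
set_option synthInstance.maxHeartbeats 400000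

/-- Realize `H²(𝔻ⁿ) ≅ ℓ²(ℕⁿ)` with coordinate shifts `S i`.  Let
`Θ_{i_1}, …, Θ_{i_m}` be one-variable inner functions in distinct variables
`i_1 < ⋯ < i_m` (given by a strictly monotone `ι : Fin m → Fin n`), with extensions
`Θ̃_{i_j}(z) = Θ_{i_j}(z_{i_j})`; the multiplication operators `T j = M_{Θ̃_{i_j}}` are
isometric multipliers (isometries commuting with every shift) depending only on the variable
`ι j` (they commute with `(S i)*` for every `i ≠ ι j`).  Then the submodule
`𝒮 = Θ̃_{i_1} H²(𝔻ⁿ) + ⋯ + Θ̃_{i_m} H²(𝔻ⁿ)` (the set of sums of elements of the ranges of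
the `T j`) is closed, and the orthogonal projection onto `𝒮` is
`E = I - ∏_{j=1}^m (I - T j (T j)*)`. -/
theorem sum_of_extended_inner_ranges_closed_and_projection_formula
    {n : ℕ}
    (S : Fin n → (lp (fun _ : Fin n → ℕ => ℂ) 2 →L[ℂ] lp (fun _ : Fin n → ℕ => ℂ) 2))
    (hS : ∀ (i : Fin n) (k : Fin n → ℕ),
      S i (lp.single 2 k (1 : ℂ)) = lp.single 2 (k + Pi.single i 1) (1 : ℂ))
    (m : ℕ) (ι : Fin m → Fin n) (hι : StrictMono ι)
    (T : Fin m → (lp (fun _ : Fin n → ℕ => ℂ) 2 →L[ℂ] lp (fun _ : Fin n → ℕ => ℂ) 2))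
    (hTiso : ∀ j x, ‖T j x‖ = ‖x‖)
    (hTmult : ∀ j i, T j ∘L S i = S i ∘L T j)
    (hTvar : ∀ j i, i ≠ ι j →
      T j ∘L ContinuousLinearMap.adjoint (S i)
        = ContinuousLinearMap.adjoint (S i) ∘L T j)
    (E : lp (fun _ : Fin n → ℕ => ℂ) 2 →L[ℂ] lp (fun _ : Fin n → ℕ => ℂ) 2)
    (hE : E = 1 - ((List.finRange m).map
      (fun j => 1 - T j ∘L ContinuousLinearMap.adjoint (T j))).prod) :
    IsClosed {x : lp (fun _ : Fin n → ℕ => ℂ) 2 |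
        ∃ y : Fin m → lp (fun _ : Fin n → ℕ => ℂ) 2,
          (∀ j, y j ∈ Set.range (T j)) ∧ x = ∑ j, y j} ∧
    IsSelfAdjoint E ∧ E ∘L E = E ∧
    Set.range E = {x : lp (fun _ : Fin n → ℕ => ℂ) 2 |
        ∃ y : Fin m → lp (fun _ : Fin n → ℕ => ℂ) 2,
          (∀ j, y j ∈ Set.range (T j)) ∧ x = ∑ j, y j} := by

  classical
  have hS' : ∀ (i : Fin n) (k : Fin n → ℕ),
      S i (Stmt17.e k) = Stmt17.e (k + Pi.single i 1) := hS
  -- adjoint of an isometry is a left inverse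
  have hTadj : ∀ j, ContinuousLinearMap.adjoint (T j) ∘L T j = 1 := by
    intro j
    refine ContinuousLinearMap.ext fun x => ?_
    refine ext_inner_right ℂ fun y => ?_
    rw [ContinuousLinearMap.comp_apply, ContinuousLinearMap.adjoint_inner_left,
      ContinuousLinearMap.one_apply]
    exact LinearIsometry.inner_map_map ⟨(T j).toLinearMap, hTiso j⟩ x y
  have hmix : ∀ j k, j ≠ k → T j ∘L ContinuousLinearMap.adjoint (T k)
      = ContinuousLinearMap.adjoint (T k) ∘L T j := by
    intro j k hjk
    exact Stmt17.mixed_comm S hS' (T j) (ι j) (hTmult j) (hTvar j)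
      (T k) (ι k) (hTmult k) (hTvar k) (fun h => hjk (hι.injective h))
  -- pass to star/mul algebra
  have humul : ∀ j, star (T j) * T j = 1 := by
    intro j
    rw [ContinuousLinearMap.star_eq_adjoint, ContinuousLinearMap.mul_def]
    exact hTadj j
  have hmixm : ∀ j k, j ≠ k → T j * star (T k) = star (T k) * T j := by
    intro j k h
    rw [ContinuousLinearMap.star_eq_adjoint, ContinuousLinearMap.mul_def,
      ContinuousLinearMap.mul_def]
    exact hmix j k h
  -- the T's commute with each other
  have hTT : ∀ j k, T j * T k = T k * T j := by
    intro j k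
    by_cases hjk : j = k
    · rw [hjk]
    · have m1 := hmixm j k hjk
      have m2 := hmixm k j (Ne.symm hjk)
      have e1 : (star (T k) * star (T j)) * (T j * T k) = 1 := by
        rw [mul_assoc, ← mul_assoc (star (T j)) (T j) (T k), humul j, one_mul, humul k]
      have e2 : (star (T k) * star (T j)) * (T k * T j) = 1 := by
        rw [mul_assoc, ← mul_assoc (star (T j)) (T k) (T j), ← m2,
          mul_assoc (T k) (star (T j)) (T j), humul j, mul_one, humul k]
      have e3 : (star (T j) * star (T k)) * (T j * T k) = 1 := by
        rw [mul_assoc, ← mul_assoc (star (T k)) (T j) (T k), ← m1,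
          mul_assoc (T j) (star (T k)) (T k), humul k, mul_one, humul j]
      have e4 : (star (T j) * star (T k)) * (T k * T j) = 1 := by
        rw [mul_assoc, ← mul_assoc (star (T k)) (T k) (T j), humul k, one_mul, humul j]
      have hDD : star (T j * T k - T k * T j) * (T j * T k - T k * T j) = 0 := by
        have expand : star (T j * T k - T k * T j) * (T j * T k - T k * T j)
            = (star (T k) * star (T j)) * (T j * T k)
              - (star (T k) * star (T j)) * (T k * T j)
              - ((star (T j) * star (T k)) * (T j * T k)
                - (star (T j) * star (T k)) * (T k * T j)) := by
          simp only [star_sub, star_mul]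
          noncomm_ring
        rw [expand, e1, e2, e3, e4]
        simp
      have hD : T j * T k - T k * T j = 0 := by
        refine ContinuousLinearMap.ext fun x => ?_
        have hz : ⟪(T j * T k - T k * T j) x, (T j * T k - T k * T j) x⟫_ℂ = 0 := by
          have h1 : ⟪x, ContinuousLinearMap.adjoint (T j * T k - T k * T j)
                ((T j * T k - T k * T j) x)⟫_ℂ
              = ⟪(T j * T k - T k * T j) x, (T j * T k - T k * T j) x⟫_ℂ :=
            ContinuousLinearMap.adjoint_inner_right _ _ _
          rw [← h1]
          have h2 : ContinuousLinearMap.adjoint (T j * T k - T k * T j)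
                ((T j * T k - T k * T j) x)
              = (star (T j * T k - T k * T j) * (T j * T k - T k * T j)) x := by
            rw [ContinuousLinearMap.star_eq_adjoint]
            rfl
          rw [h2, hDD]
          simp
        have := inner_self_eq_zero.mp hz
        simpa using this
      exact sub_eq_zero.mp hD
  have hsTT : ∀ j k, star (T j) * star (T k) = star (T k) * star (T j) := by
    intro j k
    have := congrArg star (hTT k j)
    rwa [star_mul, star_mul] at this
  -- the projections P j and their complements
  set P : Fin m → (lp (fun _ : Fin n → ℕ => ℂ) 2 →L[ℂ] lp (fun _ : Fin n → ℕ => ℂ) 2) :=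
    fun j => T j ∘L ContinuousLinearMap.adjoint (T j) with hPdef
  have hPm : ∀ j, P j = T j * star (T j) := by
    intro j
    rw [hPdef, ContinuousLinearMap.star_eq_adjoint, ContinuousLinearMap.mul_def]
  have hPP : ∀ j k, P j * P k = P k * P j := by
    intro j k
    by_cases hjk : j = k
    · rw [hjk]
    · have m1 := hmixm j k hjk
      have m2 := hmixm k j (Ne.symm hjk)
      have lhs : P j * P k = (T j * T k) * (star (T j) * star (T k)) := by
        rw [hPm, hPm, mul_assoc, ← mul_assoc (star (T j)) (T k) (star (T k)), ← m2,
          mul_assoc (T k) (star (T j)) (star (T k)), ← mul_assoc]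
      have rhs : P k * P j = (T k * T j) * (star (T k) * star (T j)) := by
        rw [hPm, hPm, mul_assoc, ← mul_assoc (star (T k)) (T j) (star (T j)), ← m1,
          mul_assoc (T j) (star (T k)) (star (T j)), ← mul_assoc]
      rw [lhs, rhs, hTT j k, hsTT j k]
  have hPsa : ∀ j, star (P j) = P j := by
    intro j
    rw [hPm, star_mul, star_star]
  have hPid : ∀ j, P j * P j = P j := by
    intro j
    rw [hPm, mul_assoc, ← mul_assoc (star (T j)) (T j) (star (T j)), humul j, one_mul]
  have hPT : ∀ j, P j * T j = T j := by
    intro j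
    rw [hPm, mul_assoc, humul j, mul_one]
  -- the complement factors
  set R : Fin m → (lp (fun _ : Fin n → ℕ => ℂ) 2 →L[ℂ] lp (fun _ : Fin n → ℕ => ℂ) 2) :=
    fun j => 1 - T j ∘L ContinuousLinearMap.adjoint (T j) with hRdef
  have hRP : ∀ j, R j = 1 - P j := fun j => rfl
  have hRR : ∀ j k, R j * R k = R k * R j := by
    intro j k
    rw [hRP, hRP]
    simp only [mul_sub, sub_mul, mul_one, one_mul]
    rw [hPP j k]
    abel
  have hRsa : ∀ j, star (R j) = R j := by
    intro j
    rw [hRP, star_sub, star_one, hPsa]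
  have hRid : ∀ j, R j * R j = R j := by
    intro j
    rw [hRP]
    simp only [mul_sub, sub_mul, mul_one, one_mul, hPid]
    abel
  have hPR : ∀ j k, P j * R k = R k * P j := by
    intro j k
    rw [hRP]
    simp only [mul_sub, sub_mul, mul_one, one_mul]
    rw [hPP j k]
  have hRP0 : ∀ j, R j * P j = 0 := by
    intro j
    rw [hRP]
    simp only [sub_mul, one_mul, hPid]
    abel
  -- list product facts
  have l1 : ∀ (L : List (Fin m)) (j), P j * (L.map R).prod = (L.map R).prod * P j := by
    intro L j
    induction L with
    | nil => simp
    | cons a L ih =>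
      simp only [List.map_cons, List.prod_cons]
      rw [← mul_assoc, hPR j a, mul_assoc, ih, ← mul_assoc]
  have l2 : ∀ (L : List (Fin m)), star ((L.map R).prod) = (L.map R).prod := by
    intro L
    induction L with
    | nil => simp
    | cons a L ih =>
      simp only [List.map_cons, List.prod_cons]
      rw [star_mul, ih, hRsa]
      -- need R a commutes with the product
      have : ∀ (L : List (Fin m)) (j), R j * (L.map R).prod = (L.map R).prod * R j := by
        intro L j
        induction L with
        | nil => simp
        | cons b L ih2 =>
          simp only [List.map_cons, List.prod_cons]
          rw [← mul_assoc, hRR j b, mul_assoc, ih2, ← mul_assoc]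
      rw [this]
  have l1R : ∀ (L : List (Fin m)) (j), R j * (L.map R).prod = (L.map R).prod * R j := by
    intro L j
    induction L with
    | nil => simp
    | cons b L ih2 =>
      simp only [List.map_cons, List.prod_cons]
      rw [← mul_assoc, hRR j b, mul_assoc, ih2, ← mul_assoc]
  have l3 : ∀ (L : List (Fin m)), (L.map R).prod * (L.map R).prod = (L.map R).prod := by
    intro L
    induction L with
    | nil => simp
    | cons a L ih =>
      simp only [List.map_cons, List.prod_cons]
      rw [mul_assoc, ← mul_assoc ((L.map R).prod) (R a) ((L.map R).prod),
        ← l1R L a, mul_assoc (R a) ((L.map R).prod) ((L.map R).prod), ih,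
        ← mul_assoc, hRid]
  have l4 : ∀ (L : List (Fin m)) (j), j ∈ L → (L.map R).prod * P j = 0 := by
    intro L j hj
    induction L with
    | nil => simp at hj
    | cons a L ih =>
      simp only [List.map_cons, List.prod_cons]
      rcases List.mem_cons.mp hj with h | h
      · subst h
        rw [mul_assoc, ← l1 L j, ← mul_assoc, hRP0, zero_mul]
      · rw [mul_assoc, ih h, mul_zero]
  -- the target set
  set Ω : Set (lp (fun _ : Fin n → ℕ => ℂ) 2) :=
    {x | ∃ y : Fin m → lp (fun _ : Fin n → ℕ => ℂ) 2,
      (∀ j, y j ∈ Set.range (T j)) ∧ x = ∑ j, y j} with hΩ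
  set Q : lp (fun _ : Fin n → ℕ => ℂ) 2 →L[ℂ] lp (fun _ : Fin n → ℕ => ℂ) 2 :=
    ((List.finRange m).map R).prod with hQ
  have hEQ : E = 1 - Q := hE
  -- every element of Ω is fixed by E
  have key1 : ∀ x ∈ Ω, E x = x := by
    intro x hx
    obtain ⟨y, hy, rfl⟩ := hx
    have hQy : ∀ j, Q (y j) = 0 := by
      intro j
      obtain ⟨z, hz⟩ := hy j
      have h1 : P j (y j) = y j := by
        rw [← hz]
        have := congrFun (congrArg (fun (C : lp (fun _ : Fin n → ℕ => ℂ) 2 →L[ℂ]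
          lp (fun _ : Fin n → ℕ => ℂ) 2) => (⇑C : _ → _)) (hPT j)) z
        simpa [ContinuousLinearMap.mul_apply] using this
      have h2 : Q (y j) = (Q * P j) (y j) := by
        rw [ContinuousLinearMap.mul_apply, h1]
      rw [h2, l4 (List.finRange m) j (List.mem_finRange j)]
      rfl
    have hQx : Q (∑ j, y j) = 0 := by
      rw [map_sum]
      exact Finset.sum_eq_zero fun j _ => hQy j

    rw [hEQ, ContinuousLinearMap.sub_apply, ContinuousLinearMap.one_apply, hQx, sub_zero]
  -- every E x lies in Ω
  have key2 : ∀ (L : List (Fin m)) (x : lp (fun _ : Fin n → ℕ => ℂ) 2),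
      ∃ y : Fin m → lp (fun _ : Fin n → ℕ => ℂ) 2,
        (∀ j, y j ∈ Set.range (T j)) ∧ (1 - (L.map R).prod) x = ∑ j, y j := by
    intro L
    induction L with
    | nil =>
      intro x
      refine ⟨fun _ => 0, fun j => ⟨0, map_zero _⟩, ?_⟩
      simp
    | cons a L ih =>
      intro x
      obtain ⟨y, hy, hsum⟩ := ih x
      refine ⟨fun j => y j + if j = a then P a (((L.map R).prod) x) else 0, ?_, ?_⟩
      · intro j
        obtain ⟨z, hz⟩ := hy j
        by_cases h : j = a
        · subst h
          refine ⟨z + ContinuousLinearMap.adjoint (T j) (((L.map R).prod) x), ?_⟩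
          rw [map_add, hz]
          simp [hPdef]
        · refine ⟨z, ?_⟩
          simp [hz, h]
      · have decomp : (1 : lp (fun _ : Fin n → ℕ => ℂ) 2 →L[ℂ] _)
            - ((a :: L).map R).prod = P a * (L.map R).prod + (1 - (L.map R).prod) := by
          simp only [List.map_cons, List.prod_cons]
          rw [hRP]
          noncomm_ring
        rw [decomp]
        rw [Finset.sum_add_distrib]
        rw [← hsum]
        rw [Finset.sum_ite_eq' Finset.univ a (fun _ => P a (((L.map R).prod) x))]
        simp only [Finset.mem_univ, if_true]
        rw [ContinuousLinearMap.add_apply, ContinuousLinearMap.mul_apply]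
        exact add_comm _ _
  -- assemble
  have hrange : Set.range E = Ω := by
    apply Set.eq_of_subset_of_subset
    · rintro x ⟨z, rfl⟩
      rw [hEQ]
      exact key2 (List.finRange m) z
    · intro x hx
      exact ⟨x, key1 x hx⟩
  have hfix : Ω = {x | E x - x = 0} := by
    apply Set.eq_of_subset_of_subset
    · intro x hx
      simp only [Set.mem_setOf_eq, key1 x hx, sub_self]
    · intro x hx
      have : E x = x := by
        have := hx
        simp only [Set.mem_setOf_eq, sub_eq_zero] at this
        exact this
      rw [← this, ← hrange]
      exact ⟨x, rfl⟩
  refine ⟨?_, ?_, ?_, hrange⟩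
  · rw [hfix]
    have : {x : lp (fun _ : Fin n → ℕ => ℂ) 2 | E x - x = 0}
        = (fun x => E x - x) ⁻¹' {0} := rfl
    rw [this]
    exact IsClosed.preimage (E.continuous.sub continuous_id) isClosed_singleton
  · rw [IsSelfAdjoint, hEQ, star_sub, star_one]
    have : star Q = Q := l2 (List.finRange m)
    rw [this]
  · rw [← ContinuousLinearMap.mul_def, hEQ]
    simp only [mul_sub, sub_mul, mul_one, one_mul]
    rw [l3 (List.finRange m)]
    abel
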